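/- Let f: [-1,1] → [-1,1] be an increasing diffeomorphism fixing ±1 with negative Schwarzian derivative. Then for all z ∈ (-1,1): (f(z) − (−1))/(z − (−1)) ≥ ((1 − f(z))/(1 − z)) · f'(−1). Consequently f(z) + 1 ≥ min{1, f'(−1)·(z+1)/(1−z)}. -/

import Mathlib

open Set

/-- Schwarzian derivative `Sf = f'''/f' - (3/2) (f''/f')²`. -/
noncomputable def schwarzian (f : ℝ → ℝ) (x : ℝ) : ℝ :=
  iteratedDeriv 3 f x / deriv f x - (3 / 2) * (iteratedDeriv 2 f x / deriv f x) ^ 2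

lemma koebeU1 (f : ℝ → ℝ) (s x : ℝ)
    (hfd : Differentiable ℝ f) (hpd : Differentiable ℝ (deriv f)) (hpx : 0 < deriv f x) :
    HasDerivAt (fun y => (1 - s * f y) * (Real.sqrt (deriv f y))⁻¹)
      (-(s * deriv f x) * (Real.sqrt (deriv f x))⁻¹ +
        (1 - s * f x) *
          (-(deriv (deriv f) x / (2 * Real.sqrt (deriv f x))) / Real.sqrt (deriv f x) ^ 2)) x := by
  have h1 : HasDerivAt (fun y => 1 - s * f y) (-(s * deriv f x)) x :=
    ((hfd x).hasDerivAt.const_mul s).const_sub 1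
  have hsq : HasDerivAt (fun y => Real.sqrt (deriv f y))
      (deriv (deriv f) x / (2 * Real.sqrt (deriv f x))) x :=
    (hpd x).hasDerivAt.sqrt hpx.ne'
  have hne : Real.sqrt (deriv f x) ≠ 0 := (Real.sqrt_pos.mpr hpx).ne'
  exact h1.mul (hsq.inv hne)

lemma koebeU2 (f : ℝ → ℝ) (s x : ℝ)
    (hfd : Differentiable ℝ f) (hpd : Differentiable ℝ (deriv f))
    (hqd : Differentiable ℝ (deriv (deriv f))) (hpx : 0 < deriv f x) :
    HasDerivAt (fun y => -(s * deriv f y) * (Real.sqrt (deriv f y))⁻¹ +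
        (1 - s * f y) *
          (-(deriv (deriv f) y / (2 * Real.sqrt (deriv f y))) / Real.sqrt (deriv f y) ^ 2))
      (-(1/2) * (1 - s * f x) * schwarzian f x * (Real.sqrt (deriv f x))⁻¹) x := by
  have hwpos : 0 < Real.sqrt (deriv f x) := Real.sqrt_pos.mpr hpx
  have hne := hwpos.ne'
  have hp := (hpd x).hasDerivAt
  have hq := (hqd x).hasDerivAt
  have hf := (hfd x).hasDerivAt
  have hsq : HasDerivAt (fun y => Real.sqrt (deriv f y))
      (deriv (deriv f) x / (2 * Real.sqrt (deriv f x))) x := hp.sqrt hpx.ne'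
  have hinv := hsq.inv hne
  have hA := ((hp.const_mul s).neg).mul hinv
  have hnum := (hq.div (hsq.const_mul 2) (by positivity)).neg
  have hden := hsq.pow 2
  have hdenne : Real.sqrt (deriv f x) ^ 2 ≠ 0 := pow_ne_zero _ hne
  have hB := (((hf.const_mul s).const_sub 1)).mul (hnum.div hden hdenne)
  have hT := hA.add hB
  refine hT.congr_deriv ?_
  simp only [Pi.pow_apply, Pi.neg_apply, Pi.div_apply, Pi.inv_apply, Pi.mul_apply]
  have h2 : iteratedDeriv 2 f = deriv (deriv f) := by
    rw [show (2:ℕ) = 1+1 from rfl, iteratedDeriv_succ, iteratedDeriv_one]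
  have h3 : iteratedDeriv 3 f = deriv (deriv (deriv f)) := by
    rw [show (3:ℕ) = 2+1 from rfl, iteratedDeriv_succ, h2]
  simp only [schwarzian, h2, h3]
  obtain ⟨w, hw0, hww⟩ : ∃ w, 0 < w ∧ Real.sqrt (deriv f x) = w := ⟨_, hwpos, rfl⟩
  have hp2 : deriv f x = w ^ 2 := by rw [← hww]; exact (Real.sq_sqrt hpx.le).symm
  rw [hww, hp2]
  have hw0' : w ≠ 0 := hw0.ne'
  field_simp
  ring

lemma koebeConvex (f : ℝ → ℝ) (s : ℝ)
    (hderiv : ∀ x ∈ Icc (-1 : ℝ) 1, 0 < deriv f x)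
    (hSchw : ∀ x ∈ Icc (-1 : ℝ) 1, schwarzian f x < 0)
    (hpos : ∀ x ∈ Icc (-1 : ℝ) 1, 0 < 1 - s * f x)
    (hfd : Differentiable ℝ f) (hpd : Differentiable ℝ (deriv f))
    (hqd : Differentiable ℝ (deriv (deriv f))) (hpcont : Continuous (deriv f)) :
    ConvexOn ℝ (Icc (-1 : ℝ) 1) (fun y => (1 - s * f y) * (Real.sqrt (deriv f y))⁻¹) := by
  apply convexOn_of_hasDerivWithinAt2_nonneg (convex_Icc _ _)
    (f' := fun x => -(s * deriv f x) * (Real.sqrt (deriv f x))⁻¹ +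
        (1 - s * f x) *
          (-(deriv (deriv f) x / (2 * Real.sqrt (deriv f x))) / Real.sqrt (deriv f x) ^ 2))
    (f'' := fun x => -(1/2) * (1 - s * f x) * schwarzian f x * (Real.sqrt (deriv f x))⁻¹)
  · apply ContinuousOn.mul
    · exact (continuous_const.sub (continuous_const.mul hfd.continuous)).continuousOn
    · exact (hpcont.continuousOn.sqrt).inv₀
        (fun x hx => (Real.sqrt_pos.mpr (hderiv x hx)).ne')
  · intro x hx
    rw [interior_Icc] at hx
    exact (koebeU1 f s x hfd hpd (hderiv x (Ioo_subset_Icc_self hx))).hasDerivWithinAt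
  · intro x hx
    rw [interior_Icc] at hx
    exact (koebeU2 f s x hfd hpd hqd (hderiv x (Ioo_subset_Icc_self hx))).hasDerivWithinAt
  · intro x hx
    rw [interior_Icc] at hx
    have hx' := Ioo_subset_Icc_self hx
    have h1 := hpos x hx'
    have h2 := hSchw x hx'
    have h3 : 0 < (Real.sqrt (deriv f x))⁻¹ := inv_pos.mpr (Real.sqrt_pos.mpr (hderiv x hx'))
    nlinarith [mul_pos (mul_pos h1 (neg_pos.mpr h2)) h3]

set_option maxHeartbeats 1000000 in
/-- One-sided Koebe principle: for an increasing diffeomorphism of `[-1,1]` fixing the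
endpoints with negative Schwarzian derivative,
`(f z + 1)/(z + 1) ≥ ((1 - f z)/(1 - z))·f'(-1)` on `(-1,1)`, and consequently
`f z + 1 ≥ min {1, f'(-1)·(z+1)/(1-z)}`. -/
theorem stmt2 (f : ℝ → ℝ) (hC3 : ContDiff ℝ 3 f)
    (hmono : StrictMonoOn f (Icc (-1) 1))
    (hbij : BijOn f (Icc (-1) 1) (Icc (-1) 1))
    (hfixm : f (-1) = -1) (hfixp : f 1 = 1)
    (hderiv : ∀ x ∈ Icc (-1 : ℝ) 1, 0 < deriv f x)
    (hSchw : ∀ x ∈ Icc (-1 : ℝ) 1, schwarzian f x < 0) :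
    ∀ z ∈ Ioo (-1 : ℝ) 1,
      (f z - (-1)) / (z - (-1)) ≥ (1 - f z) / (1 - z) * deriv f (-1) ∧
      f z + 1 ≥ min 1 (deriv f (-1) * (z + 1) / (1 - z)) := by
  have hC3' : ContDiff ℝ (2+1 : ℕ) f := by exact_mod_cast hC3
  have hCp : ContDiff ℝ 2 (deriv f) := (contDiff_succ_iff_deriv.mp hC3').2.2
  have hCp' : ContDiff ℝ (1+1 : ℕ) (deriv f) := by exact_mod_cast hCp
  have hCq : ContDiff ℝ 1 (deriv (deriv f)) := (contDiff_succ_iff_deriv.mp hCp').2.2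
  have hfd : Differentiable ℝ f := hC3.differentiable (by norm_num)
  have hpd : Differentiable ℝ (deriv f) := hCp.differentiable (by norm_num)
  have hqd : Differentiable ℝ (deriv (deriv f)) := hCq.differentiable (by norm_num)
  have hpcont : Continuous (deriv f) := hCp.continuous
  have hm1 : (-1:ℝ) ∈ Icc (-1:ℝ) 1 := by norm_num
  set c := deriv f (-1) with hcdef
  have hc : 0 < c := hderiv _ hm1
  have hc1 : 0 < c + 1 := by linarith
  set s := (c - 1) / (c + 1) with hsdef
  have hs_lt : s < 1 := by rw [hsdef, div_lt_one hc1]; linarith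
  have hs_gt : -1 < s := by rw [hsdef, lt_div_iff₀ hc1]; linarith
  have h1s : 0 < 1 - s := by linarith
  have h1s' : 0 < 1 + s := by linarith
  have hcs : c * (1 - s) = 1 + s := by rw [hsdef]; field_simp; ring
  have hs2 : 0 < 1 - s^2 := by nlinarith
  have hmaps := hbij.mapsTo
  have hpos : ∀ x ∈ Icc (-1:ℝ) 1, 0 < 1 - s * f x := by
    intro x hx
    have h1 : -1 ≤ f x := (hmaps hx).1
    have h2 : f x ≤ 1 := (hmaps hx).2
    nlinarith
  set U : ℝ → ℝ := fun y => (1 - s * f y) * (Real.sqrt (deriv f y))⁻¹ with hUdef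
  have hUconv : ConvexOn ℝ (Icc (-1:ℝ) 1) U :=
    koebeConvex f s hderiv hSchw hpos hfd hpd hqd hpcont
  have hUpos : ∀ x ∈ Icc (-1:ℝ) 1, 0 < U x := fun x hx =>
    mul_pos (hpos x hx) (inv_pos.mpr (Real.sqrt_pos.mpr (hderiv x hx)))
  have hUsq : ∀ x ∈ Icc (-1:ℝ) 1, U x ^ 2 = (1 - s * f x)^2 / deriv f x := by
    intro x hx
    simp only [hUdef]
    rw [mul_pow, inv_pow, Real.sq_sqrt (hderiv x hx).le, div_eq_mul_inv]
  set g : ℝ → ℝ := fun y => (f y - s) / (1 - s * f y) with hgdef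
  have hg_deriv : ∀ x ∈ Icc (-1:ℝ) 1,
      HasDerivAt g (deriv f x * (1 - s^2) / (1 - s * f x)^2) x := by
    intro x hx
    have h := ((hfd x).hasDerivAt.sub_const s).div
      (((hfd x).hasDerivAt.const_mul s).const_sub 1) (hpos x hx).ne'
    refine h.congr_deriv ?_
    field_simp
    ring
  have hgcont : ContinuousOn g (Icc (-1:ℝ) 1) :=
    (hfd.continuous.continuousOn.sub continuousOn_const).div
      (continuousOn_const.sub (continuousOn_const.mul hfd.continuous.continuousOn))
      (fun x hx => (hpos x hx).ne')
  have hg1 : g 1 = 1 := by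
    simp only [hgdef]
    rw [hfixp, div_eq_one_iff_eq (by nlinarith : (1:ℝ) - s * 1 ≠ 0)]
    ring
  have hgm1 : g (-1) = -1 := by
    simp only [hgdef]
    rw [hfixm, div_eq_iff (by nlinarith : (1:ℝ) - s * (-1) ≠ 0)]
    ring
  have hUm1sq : U (-1) ^ 2 = 1 - s ^ 2 := by
    rw [hUsq _ hm1, hfixm, ← hcdef, div_eq_iff hc.ne']
    nlinarith [hcs]
  intro z hz
  obtain ⟨hzl, hzr⟩ := hz
  have hzm : z ∈ Icc (-1:ℝ) 1 := ⟨hzl.le, hzr.le⟩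
  have hz1' : 0 < z + 1 := by linarith
  have hz2' : 0 < 1 - z := by linarith
  have hgz : z ≤ g z := by
    by_contra hlt
    push_neg at hlt
    obtain ⟨η, hη, hηs⟩ := exists_deriv_eq_slope g hzr
      (hgcont.mono (Icc_subset_Icc hzl.le le_rfl))
      (fun x hx => ((hg_deriv x ⟨by linarith [hx.1], (hx.2).le⟩).differentiableAt).differentiableWithinAt)
    have hηm : η ∈ Icc (-1:ℝ) 1 := ⟨by linarith [hη.1], hη.2.le⟩
    have hηd := (hg_deriv η hηm).deriv
    rw [hηd, hg1] at hηs
    have hslope : 1 < deriv f η * (1 - s^2) / (1 - s * f η)^2 := by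
      rw [hηs, lt_div_iff₀ hz2']
      linarith
    have hDlt := (one_lt_div (pow_pos (hpos η hηm) 2)).mp hslope
    have hUη : U η ^ 2 < 1 - s ^ 2 := by
      rw [hUsq _ hηm, div_lt_iff₀ (hderiv _ hηm)]
      nlinarith [hDlt]
    have hUηle : U η ≤ U (-1) := by
      nlinarith [hUη, hUm1sq, hUpos η hηm, hUpos (-1) hm1]
    obtain ⟨ξ, hξ, hξs⟩ := exists_deriv_eq_slope g (show (-1:ℝ) < z by linarith)
      (hgcont.mono (Icc_subset_Icc le_rfl hzr.le))
      (fun x hx => ((hg_deriv x ⟨(hx.1).le, by linarith [hx.2]⟩).differentiableAt).differentiableWithinAt)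
    have hξm : ξ ∈ Icc (-1:ℝ) 1 := ⟨hξ.1.le, by linarith [hξ.2]⟩
    have hξd := (hg_deriv ξ hξm).deriv
    rw [hξd, hgm1] at hξs
    have hseg : U ξ ≤ max (U (-1)) (U η) := by
      apply hUconv.le_on_segment hm1 hηm
      rw [segment_eq_Icc (show (-1:ℝ) ≤ η by linarith [hη.1])]
      exact ⟨hξ.1.le, by linarith [hξ.2, hη.1]⟩
    have hUξ : U ξ ≤ U (-1) := hseg.trans (max_le le_rfl hUηle)
    have hUξsq : U ξ ^ 2 ≤ 1 - s ^ 2 := by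
      rw [← hUm1sq]
      exact pow_le_pow_left₀ (hUpos ξ hξm).le hUξ 2
    rw [hUsq ξ hξm] at hUξsq
    have hD2 := (div_le_iff₀ (hderiv ξ hξm)).mp hUξsq
    have hgξ : 1 ≤ deriv f ξ * (1 - s^2) / (1 - s * f ξ)^2 := by
      rw [le_div_iff₀ (pow_pos (hpos ξ hξm) 2), one_mul]
      nlinarith [hD2]
    rw [hξs] at hgξ
    rw [sub_neg_eq_add, sub_neg_eq_add] at hgξ
    have := (one_le_div hz1').mp hgξ
    linarith
  have hzle : z * (1 - s * f z) ≤ f z - s := by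
    have h := hgz
    simp only [hgdef] at h
    exact (le_div_iff₀ (hpos z hzm)).mp h
  have hceq : c = (1 + s) / (1 - s) := by
    rw [eq_div_iff h1s.ne']; exact hcs
  have key : c * ((1 - f z) * (z + 1)) ≤ (f z + 1) * (1 - z) := by
    rw [hceq, div_mul_eq_mul_div, div_le_iff₀ h1s]
    nlinarith [hzle]
  constructor
  · rw [ge_iff_le, sub_neg_eq_add, sub_neg_eq_add, div_mul_eq_mul_div, div_le_div_iff₀ hz2' hz1']
    nlinarith [key]
  · have hfz1 : f z ≤ 1 := (hmaps hzm).2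
    have hfzm1 : -1 ≤ f z := (hmaps hzm).1
    have hP0 : (0:ℝ) ≤ f z + 1 := by linarith
    rcases le_total (c * (z + 1) / (1 - z)) 1 with h | h
    · rw [min_eq_right h, ge_iff_le, div_le_iff₀ hz2']
      have h' : c * (z + 1) ≤ 1 - z := (div_le_one hz2').mp h
      nlinarith [key, mul_nonneg hP0 (sub_nonneg.mpr h')]
    · rw [min_eq_left h]
      have h' : 1 - z ≤ c * (z + 1) := (one_le_div hz2').mp h
      nlinarith [key, mul_nonneg hP0 (sub_nonneg.mpr h'), mul_pos hc hz1']
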